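/- For every finite set BP of PL concepts there exist a set BP* of PL concepts in single-atom form and a knowledge base O* consisting only of definitions B ≡ A₁ ⊓ … ⊓ Aₙ between a fresh concept name and a conjunction of concept names (hence expressible in both EL and DL-lite_horn), such that for every PLSO instance (K, O, C ⊑ D) with C ∈ BP there is a corresponding C* ∈ BP* with: K ∪ O ⊨ C ⊑ D if and only if K ∪ O ∪ O* ⊨ C* ⊑ D. Moreover BP* and O* can be computed in time linear in the size of BP. -/

import Mathlib

/-! Core formalization of the policy logic `PL` of Bonatti et al.,
    "Machine Understandable Policies and GDPR Compliance Checking". -/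

namespace PLPaper

/-- Simple `PL` concepts: `C ::= A | ⊥ | ∃f.[l,u] | ∃R.C | C ⊓ C`. -/
inductive SPL : Type
  | atom  : ℕ → SPL
  | bot   : SPL
  | ival  : ℕ → ℤ → ℤ → SPL
  | ex    : ℕ → SPL → SPL
  | inter : SPL → SPL → SPL
  deriving DecidableEq

/-- A full `PL` concept: a union `C₁ ⊔ … ⊔ Cₙ` of simple concepts, given as a list. -/
abbrev PLC := List SPL

/-- Axioms of a `PL` knowledge base. -/
inductive PLAx : Type
  | funcRole : ℕ → PLAx              -- func(R), R a role name
  | funcProp : ℕ → PLAx              -- func(f), f a concrete property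
  | rangeAx  : ℕ → ℕ → PLAx          -- range(R, A)
  | incl     : ℕ → ℕ → PLAx          -- A ⊑ B
  | disj     : ℕ → ℕ → PLAx          -- disj(A, B)
  deriving DecidableEq

/-- A description-logic interpretation (concept names, role names, concrete properties). -/
structure Interp : Type 1 where
  Δ : Type
  nonempty : Nonempty Δ
  conc : ℕ → Set Δ
  role : ℕ → Set (Δ × Δ)
  cprop : ℕ → Set (Δ × ℤ)

/-- Semantics of simple `PL` concepts. -/
def SPL.sem (I : Interp) : SPL → Set I.Δ
  | .atom a => I.conc a
  | .bot => ∅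
  | .ival f l u => {d | ∃ i : ℤ, l ≤ i ∧ i ≤ u ∧ (d, i) ∈ I.cprop f}
  | .ex r c => {d | ∃ e, (d, e) ∈ I.role r ∧ e ∈ c.sem I}
  | .inter c d => c.sem I ∩ d.sem I

/-- Semantics of full `PL` concepts (finite unions). -/
def semL (I : Interp) (C : PLC) : Set I.Δ := {d | ∃ c ∈ C, d ∈ c.sem I}

/-- Satisfaction of a `PL` axiom. -/
def Interp.satAx (I : Interp) : PLAx → Prop
  | .funcRole r => ∀ ⦃d e e'⦄, (d, e) ∈ I.role r → (d, e') ∈ I.role r → e = e'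
  | .funcProp f => ∀ ⦃d i j⦄, (d, i) ∈ I.cprop f → (d, j) ∈ I.cprop f → i = j
  | .rangeAx r a => ∀ ⦃d e⦄, (d, e) ∈ I.role r → e ∈ I.conc a
  | .incl a b => I.conc a ⊆ I.conc b
  | .disj a b => I.conc a ∩ I.conc b = ∅

def Interp.satKB (I : Interp) (K : Set PLAx) : Prop := ∀ ax ∈ K, I.satAx ax

/-- `K ⊨ C ⊑ D` for full `PL` concepts. -/
def Entails (K : Set PLAx) (C D : PLC) : Prop :=
  ∀ I : Interp, I.satKB K → semL I C ⊆ semL I D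

/-- The multiset of conjuncts of a simple concept (intersections treated as sets:
    ordering and parenthesization of conjuncts is irrelevant). -/
def SPL.conj : SPL → Multiset SPL
  | .inter c d => c.conj + d.conj
  | c => {c}

/-- `⊑*`: the reflexive–transitive closure of the atomic inclusions of `K`. -/
def SubStar (K : Set PLAx) : ℕ → ℕ → Prop :=
  Relation.ReflTransGen fun a b => PLAx.incl a b ∈ K

/-- One application of one of the seven normalization rules w.r.t. `K` (Table 3);
    intersections are treated as sets of conjuncts, and rules may be applied to
    subconcepts (congruence). -/
inductive Rw (K : Set PLAx) : SPL → SPL → Prop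
  /-- rule 1: `⊥ ⊓ D ⇝ ⊥` -/
  | botConj (C : SPL) :
      SPL.bot ∈ C.conj → C ≠ SPL.bot → Rw K C SPL.bot
  /-- rule 2: `∃R.⊥ ⇝ ⊥` -/
  | exBot (r : ℕ) : Rw K (SPL.ex r SPL.bot) SPL.bot
  /-- rule 3: `∃f.[l,u] ⇝ ⊥` if `l > u` -/
  | emptyIval (f : ℕ) (l u : ℤ) : u < l → Rw K (SPL.ival f l u) SPL.bot
  /-- rule 4: merge existential restrictions over a functional role -/
  | funcRole (C C' : SPL) (r : ℕ) (D D' : SPL) (rest : Multiset SPL) :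
      PLAx.funcRole r ∈ K →
      C.conj = {SPL.ex r D, SPL.ex r D'} + rest →
      C'.conj = {SPL.ex r (SPL.inter D D')} + rest →
      Rw K C C'
  /-- rule 5: merge interval constraints over a functional concrete property -/
  | funcProp (C C' : SPL) (f : ℕ) (l₁ u₁ l₂ u₂ : ℤ) (rest : Multiset SPL) :
      PLAx.funcProp f ∈ K →
      C.conj = {SPL.ival f l₁ u₁, SPL.ival f l₂ u₂} + rest →
      C'.conj = {SPL.ival f (max l₁ l₂) (min u₁ u₂)} + rest →
      Rw K C C'
  /-- rule 6: add range information -/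
  | rangeRule (C C' : SPL) (r a : ℕ) (D : SPL) (rest : Multiset SPL) :
      PLAx.rangeAx r a ∈ K →
      SPL.atom a ∉ D.conj → SPL.bot ∉ D.conj →
      C.conj = {SPL.ex r D} + rest →
      C'.conj = {SPL.ex r (SPL.inter D (SPL.atom a))} + rest →
      Rw K C C'
  /-- rule 7: disjointness clash -/
  | disjRule (C : SPL) (a₁ a₂ b₁ b₂ : ℕ) :
      SPL.atom a₁ ∈ C.conj → SPL.atom a₂ ∈ C.conj →
      SubStar K a₁ b₁ → SubStar K a₂ b₂ →
      PLAx.disj b₁ b₂ ∈ K →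
      Rw K C SPL.bot
  /-- rules may be applied inside existential restrictions -/
  | exCongr (r : ℕ) (c c' : SPL) : Rw K c c' → Rw K (SPL.ex r c) (SPL.ex r c')
  /-- rules may be applied to one conjunct of an intersection -/
  | interCongr (C C' c c' : SPL) (rest : Multiset SPL) :
      Rw K c c' →
      C.conj = {c} + rest → C'.conj = {c'} + rest →
      Rw K C C'

/-- A simple concept is normalized w.r.t. `K` when no rule is applicable. -/
def Normalized (K : Set PLAx) (C : SPL) : Prop := ¬ ∃ C', Rw K C C'

/-- All interval constraints `∃f.[l,u]` occurring (at any depth) in a simple concept. -/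
def SPL.ivalsOf : SPL → List (ℕ × ℤ × ℤ)
  | .ival f l u => [(f, l, u)]
  | .ex _ c => c.ivalsOf
  | .inter c d => c.ivalsOf ++ d.ivalsOf
  | _ => []

def ivalsL (C : PLC) : List (ℕ × ℤ × ℤ) := C.flatMap SPL.ivalsOf

/-- The integers occurring as interval endpoints in a full concept. -/
def endpointsL (D : PLC) : List ℤ := (ivalsL D).flatMap fun t => [t.2.1, t.2.2]

/-- A subsumption `C ⊑ D` is interval safe iff every interval of `C` is either
    contained in, or disjoint from, every interval of `D`. -/
def IntervalSafe (C D : PLC) : Prop :=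
  ∀ p ∈ ivalsL C, ∀ q ∈ ivalsL D,
    Set.Icc p.2.1 p.2.2 ⊆ Set.Icc q.2.1 q.2.2 ∨
      Set.Icc p.2.1 p.2.2 ∩ Set.Icc q.2.1 q.2.2 = ∅

/-- Given the ascending chain `x₀ < x₁ < … < x_{r+1}` of cut points, produce the
    subinterval constraints `[xᵢ,xᵢ]`, `[xᵢ+1, xᵢ₊₁-1]`, …, `[x_{r+1},x_{r+1}]`. -/
def chainPieces (f : ℕ) : List ℤ → List SPL
  | [] => []
  | [x] => [SPL.ival f x x]
  | x :: y :: rest =>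
      SPL.ival f x x :: SPL.ival f (x + 1) (y - 1) :: chainPieces f (y :: rest)

/-- The endpoints of `D` lying in `[l,u]`, sorted in increasing order, without duplicates. -/
def cutPoints (E : List ℤ) (l u : ℤ) : List ℤ :=
  ((E.filter fun x => decide (l ≤ x ∧ x ≤ u)).toFinset).sort (· ≤ ·)

/-- Interval splitting of a single constraint `∃f.[l,u]` w.r.t. the endpoints `E`. -/
def splitIval (E : List ℤ) (f : ℕ) (l u : ℤ) : List SPL :=
  chainPieces f (l :: (cutPoints E l u ++ [u]))

/-- Interval normalization of a simple concept w.r.t. endpoints `E`: replace each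
    interval constraint by the union of its pieces and lift unions to the top level
    (distributivity of `⊓` over `⊔` and `∃R.(C₁ ⊔ C₂) ≡ ∃R.C₁ ⊔ ∃R.C₂`). -/
def SPL.splitC (E : List ℤ) : SPL → List SPL
  | .atom a => [.atom a]
  | .bot => [.bot]
  | .ival f l u => splitIval E f l u
  | .ex r c => (c.splitC E).map (SPL.ex r)
  | .inter c d => (c.splitC E).flatMap fun c' => (d.splitC E).map fun d' => SPL.inter c' d'

/-- `split(C, D)` for full `PL` concepts. -/
def splitL (C D : PLC) : PLC := C.flatMap (SPL.splitC (endpointsL D))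

/-- Size of (the encoding of) a simple concept. -/
def SPL.size : SPL → ℕ
  | .atom _ => 1
  | .bot => 1
  | .ival _ _ _ => 1
  | .ex _ c => c.size + 1
  | .inter c d => c.size + d.size + 1

/-- Size of a full concept. -/
def sizeL (C : PLC) : ℕ := (C.map SPL.size).sum + 1

/-- The structural subsumption algorithm `STS` (Algorithm 1): `STS K C D` holds
    iff the algorithm returns `true` on the elementary subsumption `C ⊑ D`. -/
inductive STS (K : Set PLAx) : SPL → SPL → Prop
  | botCase (D : SPL) : STS K SPL.bot D
  | atomCase (C : SPL) (a a' : ℕ) :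
      SPL.atom a' ∈ C.conj → SubStar K a' a → STS K C (SPL.atom a)
  | ivalCase (C : SPL) (f : ℕ) (l u l' u' : ℤ) :
      SPL.ival f l' u' ∈ C.conj → l ≤ l' → u' ≤ u → STS K C (SPL.ival f l u)
  | exCase (C C' D' : SPL) (r : ℕ) :
      SPL.ex r C' ∈ C.conj → STS K C' D' → STS K C (SPL.ex r D')
  | interCase (C D' D'' : SPL) :
      STS K C D' → STS K C D'' → STS K C (SPL.inter D' D'')

/-- Pointwise exhaustive normalization of the disjuncts of a full concept. -/
def RwL (K : Set PLAx) (C C' : PLC) : Prop :=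
  List.Forall₂ (Relation.ReflTransGen (Rw K)) C C'

/-- `PLR(K, C ⊑ D) = true` (Algorithm 2): normalize `C` exhaustively with the seven
    rules, split intervals w.r.t. `D`, and check every resulting disjunct against
    some disjunct of `D` with `STS`. -/
def PLRaccept (K : Set PLAx) (C D : PLC) : Prop :=
  ∃ C' : PLC, RwL K C C' ∧ (∀ c ∈ C', Normalized K c) ∧
    ∀ c ∈ splitL C' D, ∃ d ∈ D, STS K c d

/-! ### Signatures -/

def SPL.rNames : SPL → Set ℕ
  | .ex r c => insert r c.rNames
  | .inter c d => c.rNames ∪ d.rNames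
  | _ => ∅

def SPL.cNames : SPL → Set ℕ
  | .atom a => {a}
  | .ex _ c => c.cNames
  | .inter c d => c.cNames ∪ d.cNames
  | _ => ∅

def rNamesL (C : PLC) : Set ℕ := {n | ∃ c ∈ C, n ∈ SPL.rNames c}
def cNamesL (C : PLC) : Set ℕ := {n | ∃ c ∈ C, n ∈ SPL.cNames c}

def PLAx.rNames : PLAx → Set ℕ
  | .funcRole r => {r}
  | .rangeAx r _ => {r}
  | _ => ∅

def PLAx.cNames : PLAx → Set ℕ
  | .rangeAx _ a => {a}
  | .incl a b => {a, b}
  | .disj a b => {a, b}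
  | _ => ∅

def rNamesPL (K : Set PLAx) : Set ℕ := {n | ∃ ax ∈ K, n ∈ PLAx.rNames ax}
def cNamesPL (K : Set PLAx) : Set ℕ := {n | ∃ ax ∈ K, n ∈ PLAx.cNames ax}

/-! ### Horn-SRIQ oracles -/

/-- SRIQ roles: role names and their inverses. -/
inductive HRole : Type
  | name : ℕ → HRole
  | inv  : ℕ → HRole
  deriving DecidableEq

/-- The concepts allowed in normal-form Horn-SRIQ axioms:
    concept names, `⊤`, `⊥`, and `∃S.Self`. -/
inductive HAtom : Type
  | name : ℕ → HAtom
  | top  : HAtom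
  | bot  : HAtom
  | self : HRole → HAtom
  deriving DecidableEq

/-- Horn-SRIQ axioms in normal form (Table 2), plus role axioms. -/
inductive HAx : Type
  | sub2    : HAtom → HAtom → HAtom → HAx      -- C₁ ⊓ C₂ ⊑ D
  | subEx   : HRole → HAtom → HAtom → HAx      -- ∃R.C ⊑ D
  | subAll  : HAtom → HRole → HAtom → HAx      -- C ⊑ ∀R.D
  | subToEx : HAtom → HRole → HAtom → HAx      -- C ⊑ ∃R.D
  | atMost1 : HAtom → HRole → HAtom → HAx      -- C ⊑ ≤1 S.D
  | atLeast : HAtom → ℕ → HRole → HAtom → HAx  -- C ⊑ ≥n S.D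
  | rIncl   : List HRole → HRole → HAx         -- R₁ ∘ … ∘ Rₙ ⊑ R
  | rDisj   : HRole → HRole → HAx              -- disj(S₁, S₂)

def HRole.sem (I : Interp) : HRole → Set (I.Δ × I.Δ)
  | .name r => I.role r
  | .inv r => {p | (p.2, p.1) ∈ I.role r}

def HAtom.sem (I : Interp) : HAtom → Set I.Δ
  | .name a => I.conc a
  | .top => Set.univ
  | .bot => ∅
  | .self s => {d | (d, d) ∈ s.sem I}

def HRole.semChain (I : Interp) : List HRole → Set (I.Δ × I.Δ)
  | [] => {p | p.1 = p.2}
  | r :: rest => {p | ∃ z, (p.1, z) ∈ r.sem I ∧ (z, p.2) ∈ HRole.semChain I rest}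

def Interp.satHAx (I : Interp) : HAx → Prop
  | .sub2 c₁ c₂ d => c₁.sem I ∩ c₂.sem I ⊆ d.sem I
  | .subEx r c d => {x | ∃ y, (x, y) ∈ r.sem I ∧ y ∈ c.sem I} ⊆ d.sem I
  | .subAll c r d => ∀ ⦃x y⦄, x ∈ c.sem I → (x, y) ∈ r.sem I → y ∈ d.sem I
  | .subToEx c r d => ∀ ⦃x⦄, x ∈ c.sem I → ∃ y, (x, y) ∈ r.sem I ∧ y ∈ d.sem I
  | .atMost1 c s d => ∀ ⦃x y z⦄, x ∈ c.sem I → (x, y) ∈ s.sem I → y ∈ d.sem I →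
      (x, z) ∈ s.sem I → z ∈ d.sem I → y = z
  | .atLeast c n s d => ∀ ⦃x⦄, x ∈ c.sem I →
      ∃ t : Finset I.Δ, n ≤ t.card ∧ ∀ y ∈ t, (x, y) ∈ s.sem I ∧ y ∈ d.sem I
  | .rIncl rs r => HRole.semChain I rs ⊆ r.sem I
  | .rDisj s₁ s₂ => s₁.sem I ∩ s₂.sem I = ∅

def Interp.satHKB (I : Interp) (O : Set HAx) : Prop := ∀ ax ∈ O, I.satHAx ax

def HRole.base : HRole → ℕ
  | .name r => r
  | .inv r => r

def HAtom.cNames : HAtom → Set ℕ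
  | .name a => {a}
  | _ => ∅

def HAtom.rNames : HAtom → Set ℕ
  | .self s => {s.base}
  | _ => ∅

def HAx.cNames : HAx → Set ℕ
  | .sub2 c₁ c₂ d => c₁.cNames ∪ c₂.cNames ∪ d.cNames
  | .subEx _ c d => c.cNames ∪ d.cNames
  | .subAll c _ d => c.cNames ∪ d.cNames
  | .subToEx c _ d => c.cNames ∪ d.cNames
  | .atMost1 c _ d => c.cNames ∪ d.cNames
  | .atLeast c _ _ d => c.cNames ∪ d.cNames
  | .rIncl _ _ => ∅
  | .rDisj _ _ => ∅

def HAx.rNames : HAx → Set ℕ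
  | .sub2 c₁ c₂ d => c₁.rNames ∪ c₂.rNames ∪ d.rNames
  | .subEx r c d => insert r.base (c.rNames ∪ d.rNames)
  | .subAll c r d => insert r.base (c.rNames ∪ d.rNames)
  | .subToEx c r d => insert r.base (c.rNames ∪ d.rNames)
  | .atMost1 c s d => insert s.base (c.rNames ∪ d.rNames)
  | .atLeast c _ s d => insert s.base (c.rNames ∪ d.rNames)
  | .rIncl rs r => insert r.base {n | ∃ s ∈ rs, n = HRole.base s}
  | .rDisj s₁ s₂ => {s₁.base, s₂.base}

def rNamesH (O : Set HAx) : Set ℕ := {n | ∃ ax ∈ O, n ∈ HAx.rNames ax}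
def cNamesH (O : Set HAx) : Set ℕ := {n | ∃ ax ∈ O, n ∈ HAx.cNames ax}

/-! ### Axiom shifting, oracle queries, `pos(O_K⁺)` -/

/-- Range and functionality axioms. -/
def isRF : PLAx → Prop
  | .funcRole _ => True
  | .funcProp _ => True
  | .rangeAx _ _ => True
  | _ => False

/-- `K_O⁻`: the range and functionality axioms of `K`. -/
def Kminus (K : Set PLAx) : Set PLAx := {ax | ax ∈ K ∧ isRF ax}

/-- `K \ K_O⁻`: the inclusion and disjointness axioms of `K`, shifted to the oracle. -/
def Kshift (K : Set PLAx) : Set PLAx := {ax | ax ∈ K ∧ ¬ isRF ax}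

/-- Satisfaction of `O_K⁺ = O ∪ (K \ K_O⁻)`. -/
def satOplus (I : Interp) (K : Set PLAx) (O : Set HAx) : Prop :=
  I.satHKB O ∧ I.satKB (Kshift K)

/-- An oracle query `A₁ ⊓ … ⊓ A_m ⊑ A_{m+1} ⊔ … ⊔ Aₙ` (right-hand side `⊥` when empty). -/
structure OQuery : Type where
  lhs : List ℕ
  rhs : List ℕ

def Interp.satQ (I : Interp) (q : OQuery) : Prop :=
  {d | ∀ a ∈ q.lhs, d ∈ I.conc a} ⊆ {d | ∃ b ∈ q.rhs, d ∈ I.conc b}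

/-- The concept names of `sig(O_K⁺)`. -/
def cNamesOplus (K : Set PLAx) (O : Set HAx) : Set ℕ :=
  cNamesH O ∪ cNamesPL (Kshift K)

/-- `pos(O_K⁺)`: the oracle queries over `sig(O_K⁺) ∩ N_C` entailed by `O_K⁺`. -/
def posOplus (K : Set PLAx) (O : Set HAx) : Set OQuery :=
  {q | (∀ a ∈ q.lhs, a ∈ cNamesOplus K O) ∧ (∀ b ∈ q.rhs, b ∈ cNamesOplus K O) ∧
     ∀ I : Interp, satOplus I K O → I.satQ q}

/-- `K ∪ O ⊨ C ⊑ D`. -/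
def EntailsKO (K : Set PLAx) (O : Set HAx) (C D : PLC) : Prop :=
  ∀ I : Interp, I.satKB K → I.satHKB O → semL I C ⊆ semL I D

/-- `K_O⁻ ∪ pos(O_K⁺) ⊨ C ⊑ D`. -/
def EntailsShift (K : Set PLAx) (O : Set HAx) (C D : PLC) : Prop :=
  ∀ I : Interp, I.satKB (Kminus K) → (∀ q ∈ posOplus K O, I.satQ q) →
    semL I C ⊆ semL I D

/-- `O_K⁺ ⊨ A₁ ⊓ … ⊓ Aₙ ⊑ ⊥`. -/
def OplusRefutes (K : Set PLAx) (O : Set HAx) (as : List ℕ) : Prop :=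
  ∀ I : Interp, satOplus I K O → ∀ d : I.Δ, ¬ ∀ a ∈ as, d ∈ I.conc a

/-- One application of one of the seven oracle normalization rules (Table 4). -/
inductive RwO (K : Set PLAx) (O : Set HAx) : SPL → SPL → Prop
  /-- rule 1: `⊥ ⊓ D ⇝ ⊥` -/
  | botConj (C : SPL) :
      SPL.bot ∈ C.conj → C ≠ SPL.bot → RwO K O C SPL.bot
  /-- rule 2 -/
  | exBot (r : ℕ) : RwO K O (SPL.ex r SPL.bot) SPL.bot
  /-- rule 3 -/
  | emptyIval (f : ℕ) (l u : ℤ) : u < l → RwO K O (SPL.ival f l u) SPL.bot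
  /-- rule 4 -/
  | funcRole (C C' : SPL) (r : ℕ) (D D' : SPL) (rest : Multiset SPL) :
      PLAx.funcRole r ∈ Kminus K →
      C.conj = {SPL.ex r D, SPL.ex r D'} + rest →
      C'.conj = {SPL.ex r (SPL.inter D D')} + rest →
      RwO K O C C'
  /-- rule 5 (unconditional) -/
  | funcProp (C C' : SPL) (f : ℕ) (l₁ u₁ l₂ u₂ : ℤ) (rest : Multiset SPL) :
      C.conj = {SPL.ival f l₁ u₁, SPL.ival f l₂ u₂} + rest →
      C'.conj = {SPL.ival f (max l₁ l₂) (min u₁ u₂)} + rest →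
      RwO K O C C'
  /-- rule 6 -/
  | rangeRule (C C' : SPL) (r a : ℕ) (D : SPL) (rest : Multiset SPL) :
      PLAx.rangeAx r a ∈ Kminus K →
      SPL.atom a ∉ D.conj → SPL.bot ∉ D.conj →
      C.conj = {SPL.ex r D} + rest →
      C'.conj = {SPL.ex r (SPL.inter D (SPL.atom a))} + rest →
      RwO K O C C'
  /-- rule 7: `A₁ ⊓ … ⊓ Aₙ ⊓ D ⇝ ⊥` if `O_K⁺ ⊨ A₁ ⊓ … ⊓ Aₙ ⊑ ⊥` -/
  | atomsBot (C : SPL) (as : List ℕ) :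
      as ≠ [] → (∀ a ∈ as, SPL.atom a ∈ C.conj) → OplusRefutes K O as →
      RwO K O C SPL.bot
  /-- congruence: inside existential restrictions -/
  | exCongr (r : ℕ) (c c' : SPL) : RwO K O c c' → RwO K O (SPL.ex r c) (SPL.ex r c')
  /-- congruence: on one conjunct -/
  | interCongr (C C' c c' : SPL) (rest : Multiset SPL) :
      RwO K O c c' →
      C.conj = {c} + rest → C'.conj = {c'} + rest →
      RwO K O C C'

/-- `C` is normalized w.r.t. `K` and `O`. -/
def NormalizedO (K : Set PLAx) (O : Set HAx) (C : SPL) : Prop := ¬ ∃ C', RwO K O C C'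

/-! ### The canonical model of a normalized simple concept -/

/-- The top-level existential restrictions of a simple concept, in syntactic order. -/
def SPL.exList : SPL → List (ℕ × SPL)
  | .ex r c => [(r, c)]
  | .inter c d => c.exList ++ d.exList
  | _ => []

/-- The top-level concept names of a simple concept. -/
def SPL.atomList : SPL → List ℕ
  | .atom a => [a]
  | .inter c d => c.atomList ++ d.atomList
  | _ => []

/-- The top-level interval constraints of a simple concept. -/
def SPL.ivalList : SPL → List (ℕ × ℤ × ℤ)
  | .ival f l u => [(f, l, u)]
  | .inter c d => c.ivalList ++ d.ivalList
  | _ => []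

/-- The subconcept of `C` reached by following a path of indices into the
    nested top-level existential restrictions. -/
def subAt : List ℕ → SPL → Option SPL
  | [], C => some C
  | i :: p, C =>
    match C.exList[i]? with
    | some rc => subAt p rc.2
    | none => none

/-- The canonical model of a simple concept `C` w.r.t. `K` and `O` (Definition 18):
    its domain is the tree of nested existential restrictions of `C`. -/
def canonInterp (K : Set PLAx) (O : Set HAx) (C : SPL) : Interp where
  Δ := {p : List ℕ // (subAt p C).isSome}
  nonempty := ⟨⟨[], by simp [subAt]⟩⟩
  conc := fun a => {p | ∃ C', subAt p.1 C = some C' ∧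
    (OQuery.mk C'.atomList [a]) ∈ posOplus K O}
  role := fun r => {pq | ∃ (C' : SPL) (i : ℕ) (rc : ℕ × SPL),
    subAt pq.1.1 C = some C' ∧ C'.exList[i]? = some rc ∧ rc.1 = r ∧
    pq.2.1 = pq.1.1 ++ [i]}
  cprop := fun f => {pi | ∃ (C' : SPL) (l : ℤ),
    subAt pi.1.1 C = some C' ∧ (f, l, pi.2) ∈ C'.ivalList}

/-- The distinguished point `d` of the canonical model. -/
def canonRoot (K : Set PLAx) (O : Set HAx) (C : SPL) : (canonInterp K O C).Δ :=
  ⟨[], by simp [subAt]⟩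

/-! ### The oracle structural subsumption algorithm and `PLR^O` -/

/-- `STS^O` (Algorithm 3), with the oracle `O_K⁺`. -/
inductive STSO (K : Set PLAx) (O : Set HAx) : SPL → SPL → Prop
  | botCase (D : SPL) : STSO K O SPL.bot D
  | atomCase (C : SPL) (a : ℕ) :
      (OQuery.mk C.atomList [a]) ∈ posOplus K O → STSO K O C (SPL.atom a)
  | ivalCase (C : SPL) (f : ℕ) (l u l' u' : ℤ) :
      SPL.ival f l' u' ∈ C.conj → l ≤ l' → u' ≤ u → STSO K O C (SPL.ival f l u)
  | exCase (C C' D' : SPL) (r : ℕ) :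
      SPL.ex r C' ∈ C.conj → STSO K O C' D' → STSO K O C (SPL.ex r D')
  | interCase (C D' D'' : SPL) :
      STSO K O C D' → STSO K O C D'' → STSO K O C (SPL.inter D' D'')

def RwOL (K : Set PLAx) (O : Set HAx) (C C' : PLC) : Prop :=
  List.Forall₂ (Relation.ReflTransGen (RwO K O)) C C'

/-- `PLR^O(K, C ⊑ D) = true` (Algorithm 4). -/
def PLROaccept (K : Set PLAx) (O : Set HAx) (C D : PLC) : Prop :=
  ∃ C' : PLC, RwOL K O C C' ∧ (∀ c ∈ C', NormalizedO K O c) ∧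
    ∀ c ∈ splitL C' D, ∃ d ∈ D, STSO K O c d

/-! ### Single-atom form and oracle compilation -/

/-- Auxiliary predicate: every conjunct is a concept name, an interval constraint,
    or an existential restriction whose filler is in single-atom form. -/
def SAaux : SPL → Prop
  | .atom _ => True
  | .bot => False
  | .ival _ _ _ => True
  | .ex _ c => SAaux c ∧ c.atomList.length ≤ 1
  | .inter c d => SAaux c ∧ SAaux d

/-- A simple concept in single-atom form. -/
def SingleAtomS (C : SPL) : Prop := SAaux C ∧ C.atomList.length ≤ 1

/-- A full concept in single-atom form. -/
def SingleAtomL (C : PLC) : Prop := ∀ c ∈ C, SingleAtomS c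

/-- `comp(K, O) = K_O⁻ ∪ { A ⊑ B : (A ⊑ B) ∈ pos(O_K⁺) }`. -/
def compKB (K : Set PLAx) (O : Set HAx) : Set PLAx :=
  Kminus K ∪ {ax | ∃ a b : ℕ, ax = PLAx.incl a b ∧ (OQuery.mk [a] [b]) ∈ posOplus K O}

/-- A definition `B ≡ A₁ ⊓ … ⊓ Aₙ` (expressible in both EL and DL-lite_horn). -/
abbrev CDef := ℕ × List ℕ

def Interp.satDef (I : Interp) (df : CDef) : Prop :=
  I.conc df.1 = {d | ∀ a ∈ df.2, d ∈ I.conc a}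

/-- `K ∪ O ∪ O* ⊨ C ⊑ D`, where `O*` is a list of definitions. -/
def EntailsKODefs (K : Set PLAx) (O : Set HAx) (defs : List CDef) (C D : PLC) : Prop :=
  ∀ I : Interp, I.satKB K → I.satHKB O → (∀ df ∈ defs, I.satDef df) →
    semL I C ⊆ semL I D

def defsSize (defs : List CDef) : ℕ := (defs.map fun p => p.2.length + 1).sum

end PLPaper

namespace PLPaper

/-! ### Auxiliary definitions for Statement 15 -/

/-- Whether `⊥` occurs anywhere in a simple concept. -/
def hasBot : SPL → Bool
  | .atom _ => false
  | .bot => true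
  | .ival _ _ _ => false
  | .ex _ c => hasBot c
  | .inter c d => hasBot c || hasBot d

/-- Build the conjunction of a nonempty list of simple concepts. -/
def build : List SPL → SPL
  | [] => .bot
  | [x] => x
  | x :: y :: xs => .inter x (build (y :: xs))

/-- The (≤ 1 element) list of top-level atoms after merging. -/
def headAtoms (fresh : List ℕ → ℕ) : List ℕ → List SPL
  | [] => []
  | [a] => [.atom a]
  | as => [.atom (fresh as)]

/-- The definitions generated for a top-level atom list. -/
def headDefs (fresh : List ℕ → ℕ) : List ℕ → List CDef
  | [] => []
  | [_] => []
  | as => [(fresh as, as)]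

mutual
/-- Single-atom translation of a simple concept. -/
def trS (fresh : List ℕ → ℕ) (C : SPL) : SPL :=
  build (headAtoms fresh C.atomList ++ strip fresh C)
  termination_by 2 * C.size + 1
/-- The non-atom top-level conjuncts, with translated fillers. -/
def strip (fresh : List ℕ → ℕ) : SPL → List SPL
  | .atom _ => []
  | .bot => []
  | .ival f l u => [.ival f l u]
  | .ex r c => [.ex r (trS fresh c)]
  | .inter c d => strip fresh c ++ strip fresh d
  termination_by C => 2 * C.size
  decreasing_by all_goals (simp [SPL.size]; try omega)
end

mutual
/-- The definitions generated for a simple concept. -/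
def defsOf (fresh : List ℕ → ℕ) (C : SPL) : List CDef :=
  headDefs fresh C.atomList ++ defsInner fresh C
  termination_by 2 * C.size + 1
def defsInner (fresh : List ℕ → ℕ) : SPL → List CDef
  | .ex _ c => defsOf fresh c
  | .inter c d => defsInner fresh c ++ defsInner fresh d
  | _ => []
  termination_by C => 2 * C.size
  decreasing_by all_goals (simp [SPL.size]; try omega)
end


lemma sem_empty_of_hasBot (I : Interp) : ∀ C : SPL, hasBot C = true → C.sem I = ∅ := by
  intro C h
  induction C with
  | atom a => simp [hasBot] at h
  | bot => rfl
  | ival f l u => simp [hasBot] at h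
  | ex r c ih =>
      simp only [hasBot] at h
      ext d; simp [SPL.sem, ih h]
  | inter c d ihc ihd =>
      simp only [hasBot, Bool.or_eq_true] at h
      ext x
      rcases h with h | h
      · simp [SPL.sem, ihc h]
      · simp [SPL.sem, ihd h]

lemma mem_sem_build (I : Interp) (d : I.Δ) :
    ∀ (xs : List SPL) (x : SPL), d ∈ (build (x :: xs)).sem I ↔ ∀ y ∈ x :: xs, d ∈ y.sem I := by
  intro xs
  induction xs with
  | nil => intro x; simp [build]
  | cons y ys ih =>
      intro x
      have : build (x :: y :: ys) = .inter x (build (y :: ys)) := rfl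
      rw [this]
      simp only [SPL.sem, Set.mem_inter_iff, ih y, List.mem_cons]
      constructor
      · rintro ⟨h1, h2⟩ z (rfl | hz)
        · exact h1
        · exact h2 z hz
      · intro h
        exact ⟨h x (Or.inl rfl), fun z hz => h z (Or.inr hz)⟩

lemma mem_sem_build' (I : Interp) (d : I.Δ) (L : List SPL) (hL : L ≠ []) :
    d ∈ (build L).sem I ↔ ∀ y ∈ L, d ∈ y.sem I := by
  cases L with
  | nil => exact absurd rfl hL
  | cons x xs => exact mem_sem_build I d xs x

lemma sem_decomp (I : Interp) : ∀ C : SPL, hasBot C = false → ∀ d : I.Δ,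
    d ∈ C.sem I ↔ ((∀ a ∈ C.atomList, d ∈ I.conc a) ∧
      (∀ t ∈ C.ivalList, ∃ i : ℤ, t.2.1 ≤ i ∧ i ≤ t.2.2 ∧ (d, i) ∈ I.cprop t.1) ∧
      (∀ t ∈ C.exList, ∃ e, (d, e) ∈ I.role t.1 ∧ e ∈ t.2.sem I)) := by
  intro C hb
  induction C with
  | atom a => intro d; simp [SPL.sem, SPL.atomList, SPL.ivalList, SPL.exList]
  | bot => simp [hasBot] at hb
  | ival f l u =>
      intro d
      simp [SPL.sem, SPL.atomList, SPL.ivalList, SPL.exList]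
  | ex r c ih =>
      intro d
      simp [SPL.sem, SPL.atomList, SPL.ivalList, SPL.exList]
  | inter c d ihc ihd =>
      simp only [hasBot, Bool.or_eq_false_iff] at hb
      intro x
      simp only [SPL.sem, Set.mem_inter_iff, ihc hb.1, ihd hb.2, SPL.atomList, SPL.ivalList,
        SPL.exList, List.mem_append]
      constructor
      · rintro ⟨⟨a1, i1, e1⟩, ⟨a2, i2, e2⟩⟩
        refine ⟨fun a ha => ha.elim (a1 a) (a2 a), fun t ht => ht.elim (i1 t) (i2 t),
          fun t ht => ht.elim (e1 t) (e2 t)⟩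
      · rintro ⟨ha, hi, he⟩
        exact ⟨⟨fun a h => ha a (Or.inl h), fun t h => hi t (Or.inl h), fun t h => he t (Or.inl h)⟩,
          ⟨fun a h => ha a (Or.inr h), fun t h => hi t (Or.inr h), fun t h => he t (Or.inr h)⟩⟩

lemma ne_nil_of_not_hasBot (fresh : List ℕ → ℕ) : ∀ C : SPL, hasBot C = false →
    C.atomList ≠ [] ∨ strip fresh C ≠ [] := by
  intro C hb
  induction C with
  | atom a => left; simp [SPL.atomList]
  | bot => simp [hasBot] at hb
  | ival f l u => right; simp [strip]
  | ex r c ih => right; simp [strip]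
  | inter c d ihc ihd =>
      simp only [hasBot, Bool.or_eq_false_iff] at hb
      rcases ihc hb.1 with h | h
      · left
        show c.atomList ++ d.atomList ≠ []
        intro h'; exact h (List.append_eq_nil_iff.mp h').1
      · right
        have e : strip fresh (SPL.inter c d) = strip fresh c ++ strip fresh d := by
          simp [strip]
        rw [e]
        intro h'; exact h (List.append_eq_nil_iff.mp h').1

lemma headAtoms_ne_nil (fresh : List ℕ → ℕ) (as : List ℕ) (h : as ≠ []) :
    headAtoms fresh as ≠ [] := by
  match as with
  | [] => exact absurd rfl h
  | [a] => simp [headAtoms]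
  | a :: b :: t => simp [headAtoms]

lemma trS_list_ne_nil (fresh : List ℕ → ℕ) (C : SPL) (hb : hasBot C = false) :
    headAtoms fresh C.atomList ++ strip fresh C ≠ [] := by
  rcases ne_nil_of_not_hasBot fresh C hb with h | h
  · simp only [ne_eq, List.append_eq_nil_iff]
    intro h'
    exact headAtoms_ne_nil fresh _ h h'.1
  · simp only [ne_eq, List.append_eq_nil_iff]
    intro h'
    exact h h'.2

lemma headAtoms_sem (fresh : List ℕ → ℕ) (I : Interp) (d : I.Δ) (as : List ℕ)
    (hdef : ∀ df ∈ headDefs fresh as, I.satDef df) :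
    (∀ y ∈ headAtoms fresh as, d ∈ y.sem I) ↔ ∀ a ∈ as, d ∈ I.conc a := by
  match as with
  | [] => simp [headAtoms]
  | [a] => simp [headAtoms, SPL.sem]
  | a :: b :: t =>
      have hd := hdef (fresh (a :: b :: t), a :: b :: t) (by simp [headDefs])
      simp only [Interp.satDef] at hd
      simp only [headAtoms, List.mem_singleton, SPL.sem, forall_eq]
      rw [hd]
      simp only [Set.mem_setOf_eq]

lemma hasBot_exList : ∀ (C : SPL), hasBot C = false → ∀ t ∈ C.exList, hasBot t.2 = false := by
  intro C hb
  induction C with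
  | atom a => simp [SPL.exList]
  | bot => simp [SPL.exList]
  | ival f l u => simp [SPL.exList]
  | ex r c ih =>
      simp only [hasBot] at hb
      intro t ht
      simp only [SPL.exList, List.mem_singleton] at ht
      subst ht; exact hb
  | inter c d ihc ihd =>
      simp only [hasBot, Bool.or_eq_false_iff] at hb
      intro t ht
      simp only [SPL.exList, List.mem_append] at ht
      exact ht.elim (ihc hb.1 t) (ihd hb.2 t)

mutual
theorem sem_trS (fresh : List ℕ → ℕ) (I : Interp) (C : SPL) (hb : hasBot C = false)
    (hdef : ∀ df ∈ defsOf fresh C, I.satDef df) (d : I.Δ) :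
    d ∈ (trS fresh C).sem I ↔ d ∈ C.sem I := by
  rw [trS, mem_sem_build' I d _ (trS_list_ne_nil fresh C hb), sem_decomp I C hb d]
  rw [List.forall_mem_append]
  have h1 : ∀ df ∈ headDefs fresh C.atomList, I.satDef df := fun df h =>
    hdef df (by rw [defsOf]; exact List.mem_append_left _ h)
  have h2 : ∀ df ∈ defsInner fresh C, I.satDef df := fun df h =>
    hdef df (by rw [defsOf]; exact List.mem_append_right _ h)
  rw [headAtoms_sem fresh I d _ h1, strip_sem fresh I C hb h2 d]
  termination_by 2 * C.size + 1
  decreasing_by omega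

theorem strip_sem (fresh : List ℕ → ℕ) (I : Interp) (C : SPL) (hb : hasBot C = false)
    (hdef : ∀ df ∈ defsInner fresh C, I.satDef df) (d : I.Δ) :
    (∀ y ∈ strip fresh C, d ∈ y.sem I) ↔
      ((∀ t ∈ C.ivalList, ∃ i : ℤ, t.2.1 ≤ i ∧ i ≤ t.2.2 ∧ (d, i) ∈ I.cprop t.1) ∧
       (∀ t ∈ C.exList, ∃ e, (d, e) ∈ I.role t.1 ∧ e ∈ t.2.sem I)) := by
  match C, hb with
  | .atom a, hb => simp [strip, SPL.ivalList, SPL.exList]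
  | .ival f l u, hb => simp [strip, SPL.ivalList, SPL.exList, SPL.sem]
  | .ex r c, hb =>
      have hbc : hasBot c = false := hb
      have hdc : ∀ df ∈ defsOf fresh c, I.satDef df := fun df h =>
        hdef df (by rw [defsInner]; exact h)
      have key : ∀ e : I.Δ, e ∈ (trS fresh c).sem I ↔ e ∈ c.sem I :=
        sem_trS fresh I c hbc hdc
      simp [strip, SPL.ivalList, SPL.exList, SPL.sem, key]
  | .inter c c', hb =>
      have hb' := hb
      simp only [hasBot, Bool.or_eq_false_iff] at hb'
      have hdc : ∀ df ∈ defsInner fresh c, I.satDef df := fun df h =>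
        hdef df (by rw [defsInner]; exact List.mem_append_left _ h)
      have hdc' : ∀ df ∈ defsInner fresh c', I.satDef df := fun df h =>
        hdef df (by rw [defsInner]; exact List.mem_append_right _ h)
      have ih1 := strip_sem fresh I c hb'.1 hdc d
      have ih2 := strip_sem fresh I c' hb'.2 hdc' d
      have e1 : strip fresh (SPL.inter c c') = strip fresh c ++ strip fresh c' := by
        simp [strip]
      have e2 : (SPL.inter c c').ivalList = c.ivalList ++ c'.ivalList := rfl
      have e3 : (SPL.inter c c').exList = c.exList ++ c'.exList := rfl
      rw [e1, e2, e3, List.forall_mem_append, ih1, ih2,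
        List.forall_mem_append, List.forall_mem_append]
      tauto
  termination_by 2 * C.size
  decreasing_by all_goals (simp [SPL.size]; try omega)
end


lemma atomList_build : ∀ (xs : List SPL) (x : SPL),
    (build (x :: xs)).atomList = (x :: xs).flatMap SPL.atomList := by
  intro xs
  induction xs with
  | nil => intro x; simp [build]
  | cons y ys ih =>
      intro x
      have : build (x :: y :: ys) = .inter x (build (y :: ys)) := rfl
      rw [this]
      show x.atomList ++ (build (y :: ys)).atomList = _
      rw [ih y]
      simp

lemma SAaux_build : ∀ (xs : List SPL) (x : SPL), (∀ y ∈ x :: xs, SAaux y) →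
    SAaux (build (x :: xs)) := by
  intro xs
  induction xs with
  | nil => intro x h; exact h x (by simp)
  | cons y ys ih =>
      intro x h
      have e : build (x :: y :: ys) = .inter x (build (y :: ys)) := rfl
      rw [e]
      exact ⟨h x (by simp), ih y fun z hz => h z (List.mem_cons_of_mem _ hz)⟩

lemma headAtoms_props (fresh : List ℕ → ℕ) (as : List ℕ) :
    (∀ y ∈ headAtoms fresh as, SAaux y) ∧
      ((headAtoms fresh as).flatMap SPL.atomList).length ≤ 1 := by
  match as with
  | [] => simp [headAtoms]
  | [a] => simp [headAtoms, SAaux, SPL.atomList]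
  | a :: b :: t => simp [headAtoms, SAaux, SPL.atomList]

mutual
theorem singleAtom_trS (fresh : List ℕ → ℕ) (C : SPL) (hb : hasBot C = false) :
    SingleAtomS (trS fresh C) := by
  have hstrip := strip_props fresh C hb
  rw [trS]
  obtain ⟨x, xs, e⟩ := List.exists_cons_of_ne_nil (trS_list_ne_nil fresh C hb)
  rw [e]
  constructor
  · refine SAaux_build xs x fun y hy => ?_
    rw [← e] at hy
    rcases List.mem_append.mp hy with h | h
    · exact (headAtoms_props fresh C.atomList).1 y h
    · exact (hstrip y h).1
  · rw [atomList_build, ← e, List.flatMap_append]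
    have h2 : (strip fresh C).flatMap SPL.atomList = [] := by
      rw [List.flatMap_eq_nil_iff]
      intro y hy
      exact (hstrip y hy).2
    rw [h2, List.append_nil]
    exact (headAtoms_props fresh C.atomList).2
  termination_by 2 * C.size + 1
  decreasing_by omega

theorem strip_props (fresh : List ℕ → ℕ) (C : SPL) (hb : hasBot C = false) :
    ∀ y ∈ strip fresh C, SAaux y ∧ y.atomList = [] := by
  match C, hb with
  | .atom a, hb => simp [strip]
  | .ival f l u, hb => simp [strip, SAaux, SPL.atomList]
  | .ex r c, hb =>
      have hbc : hasBot c = false := hb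
      have hsa := singleAtom_trS fresh c hbc
      intro y hy
      have e : strip fresh (SPL.ex r c) = [.ex r (trS fresh c)] := by simp [strip]
      rw [e, List.mem_singleton] at hy
      subst hy
      exact ⟨⟨hsa.1, hsa.2⟩, rfl⟩
  | .inter c c', hb =>
      have hb' := hb
      simp only [hasBot, Bool.or_eq_false_iff] at hb'
      intro y hy
      have e : strip fresh (SPL.inter c c') = strip fresh c ++ strip fresh c' := by
        simp [strip]
      rw [e, List.mem_append] at hy
      exact hy.elim (strip_props fresh c hb'.1 y) (strip_props fresh c' hb'.2 y)
  termination_by 2 * C.size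
  decreasing_by all_goals (simp [SPL.size]; try omega)
end


/-! ### Size bounds -/

lemma size_build' : ∀ (xs : List SPL) (x : SPL),
    (build (x :: xs)).size + 1 = ((x :: xs).map SPL.size).sum + (x :: xs).length := by
  intro xs
  induction xs with
  | nil => intro x; simp [build]
  | cons y ys ih =>
      intro x
      have e : build (x :: y :: ys) = .inter x (build (y :: ys)) := rfl
      rw [e]
      show x.size + (build (y :: ys)).size + 1 + 1 = _
      have := ih y
      simp only [List.map_cons, List.sum_cons, List.length_cons] at this ⊢
      omega

lemma headAtoms_size (fresh : List ℕ → ℕ) (as : List ℕ) :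
    ((headAtoms fresh as).map SPL.size).sum = (headAtoms fresh as).length ∧
      (headAtoms fresh as).length = min as.length 1 := by
  match as with
  | [] => simp [headAtoms]
  | [a] => simp [headAtoms, SPL.size]
  | a :: b :: t => simp [headAtoms, SPL.size]

mutual
theorem size_trS (fresh : List ℕ → ℕ) (C : SPL) (hb : hasBot C = false) :
    (trS fresh C).size ≤ C.size := by
  have hne := trS_list_ne_nil fresh C hb
  have h1 := strip_size fresh C hb
  have h2 := strip_size' fresh C hb
  have hH := headAtoms_size fresh C.atomList
  rw [trS]
  obtain ⟨x, xs, e⟩ := List.exists_cons_of_ne_nil hne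
  have hb' := size_build' xs x
  rw [← e] at hb'
  rw [List.map_append, List.sum_append, List.length_append] at hb'
  omega
  termination_by 2 * C.size + 1
  decreasing_by all_goals omega

theorem strip_size (fresh : List ℕ → ℕ) (C : SPL) (hb : hasBot C = false) :
    ((strip fresh C).map SPL.size).sum + (strip fresh C).length + C.atomList.length
      ≤ C.size + 1 := by
  match C, hb with
  | .atom a, hb => simp [strip, SPL.atomList, SPL.size]
  | .ival f l u, hb => simp [strip, SPL.atomList, SPL.size]
  | .ex r c, hb =>
      have hbc : hasBot c = false := hb
      have := size_trS fresh c hbc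
      have e : strip fresh (SPL.ex r c) = [.ex r (trS fresh c)] := by simp [strip]
      rw [e]
      show SPL.size (.ex r (trS fresh c)) + 0 + (1 + 0) + List.length [] ≤ (c.size + 1) + 1
      simp [SPL.size]
      omega
  | .inter c c', hb =>
      have hb' := hb
      simp only [hasBot, Bool.or_eq_false_iff] at hb'
      have ih1 := strip_size fresh c hb'.1
      have ih2 := strip_size fresh c' hb'.2
      have e : strip fresh (SPL.inter c c') = strip fresh c ++ strip fresh c' := by
        simp [strip]
      have e2 : (SPL.inter c c').atomList = c.atomList ++ c'.atomList := rfl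
      have e3 : (SPL.inter c c').size = c.size + c'.size + 1 := rfl
      rw [e, e2, e3, List.map_append, List.sum_append, List.length_append,
        List.length_append]
      omega
  termination_by 2 * C.size
  decreasing_by all_goals (simp [SPL.size]; try omega)

theorem strip_size' (fresh : List ℕ → ℕ) (C : SPL) (hb : hasBot C = false) :
    1 ≤ C.atomList.length →
    ((strip fresh C).map SPL.size).sum + (strip fresh C).length + C.atomList.length
      ≤ C.size := by
  match C, hb with
  | .atom a, hb => intro _; simp [strip, SPL.atomList, SPL.size]
  | .ival f l u, hb => intro h; simp [SPL.atomList] at h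
  | .ex r c, hb => intro h; simp [SPL.atomList] at h
  | .inter c c', hb =>
      intro h
      have hb' := hb
      simp only [hasBot, Bool.or_eq_false_iff] at hb'
      have e : strip fresh (SPL.inter c c') = strip fresh c ++ strip fresh c' := by
        simp [strip]
      have e2 : (SPL.inter c c').atomList = c.atomList ++ c'.atomList := rfl
      have e3 : (SPL.inter c c').size = c.size + c'.size + 1 := rfl
      rw [e2, List.length_append] at h ⊢
      rw [e, e3, List.map_append, List.sum_append, List.length_append]
      rcases Nat.eq_zero_or_pos c.atomList.length with h0 | h1
      · have ih1 := strip_size fresh c hb'.1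
        have ih2 := strip_size' fresh c' hb'.2 (by omega)
        omega
      · have ih1 := strip_size' fresh c hb'.1 h1
        have ih2 := strip_size fresh c' hb'.2
        omega
  termination_by 2 * C.size
  decreasing_by all_goals (simp [SPL.size]; try omega)
end

lemma defsSize_append (l1 l2 : List CDef) :
    defsSize (l1 ++ l2) = defsSize l1 + defsSize l2 := by
  simp [defsSize]

lemma headDefs_size (fresh : List ℕ → ℕ) (as : List ℕ) :
    defsSize (headDefs fresh as) ≤ 2 * as.length := by
  match as with
  | [] => simp [headDefs, defsSize]
  | [a] => simp [headDefs, defsSize]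
  | a :: b :: t => simp [headDefs, defsSize]

mutual
theorem defsOf_size (fresh : List ℕ → ℕ) (C : SPL) :
    defsSize (defsOf fresh C) ≤ 2 * C.size := by
  have h1 := headDefs_size fresh C.atomList
  have h2 := defsInner_size fresh C
  rw [defsOf, defsSize_append]
  omega
  termination_by 2 * C.size + 1
  decreasing_by omega

theorem defsInner_size (fresh : List ℕ → ℕ) (C : SPL) :
    defsSize (defsInner fresh C) + 2 * C.atomList.length ≤ 2 * C.size := by
  match C with
  | .atom a => simp [defsInner, SPL.atomList, SPL.size, defsSize]
  | .bot => simp [defsInner, SPL.atomList, SPL.size, defsSize]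
  | .ival f l u => simp [defsInner, SPL.atomList, SPL.size, defsSize]
  | .ex r c =>
      have := defsOf_size fresh c
      have e : defsInner fresh (SPL.ex r c) = defsOf fresh c := by simp [defsInner]
      rw [e]
      show _ + 2 * List.length [] ≤ 2 * (c.size + 1)
      simp
      omega
  | .inter c c' =>
      have ih1 := defsInner_size fresh c
      have ih2 := defsInner_size fresh c'
      have e : defsInner fresh (SPL.inter c c') = defsInner fresh c ++ defsInner fresh c' := by
        simp [defsInner]
      have e2 : (SPL.inter c c').atomList = c.atomList ++ c'.atomList := rfl
      have e3 : (SPL.inter c c').size = c.size + c'.size + 1 := rfl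
      rw [e, e2, e3, defsSize_append, List.length_append]
      omega
  termination_by 2 * C.size
  decreasing_by all_goals (simp [SPL.size]; try omega)
end


/-! ### Names and freshness -/

lemma mem_cNames_of_mem_atomList : ∀ C : SPL, ∀ a ∈ C.atomList, a ∈ C.cNames := by
  intro C
  induction C with
  | atom a => simp [SPL.atomList, SPL.cNames]
  | bot => simp [SPL.atomList]
  | ival f l u => simp [SPL.atomList]
  | ex r c ih => simp [SPL.atomList]
  | inter c c' ihc ihd =>
      intro a ha
      rcases List.mem_append.mp ha with h | h
      · exact Or.inl (ihc a h)
      · exact Or.inr (ihd a h)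

lemma headDefs_spec (fresh : List ℕ → ℕ) (as : List ℕ) :
    ∀ df ∈ headDefs fresh as, df.1 = fresh df.2 ∧ df.2 = as := by
  match as with
  | [] => simp [headDefs]
  | [a] => simp [headDefs]
  | a :: b :: t => simp [headDefs]

mutual
theorem defsOf_spec (fresh : List ℕ → ℕ) (C : SPL) :
    ∀ df ∈ defsOf fresh C, df.1 = fresh df.2 ∧ ∀ b ∈ df.2, b ∈ C.cNames := by
  intro df hdf
  rw [defsOf] at hdf
  rcases List.mem_append.mp hdf with h | h
  · obtain ⟨h1, h2⟩ := headDefs_spec fresh C.atomList df h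
    exact ⟨h1, fun b hb => mem_cNames_of_mem_atomList C b (h2 ▸ hb)⟩
  · exact defsInner_spec fresh C df h
  termination_by 2 * C.size + 1
  decreasing_by omega

theorem defsInner_spec (fresh : List ℕ → ℕ) (C : SPL) :
    ∀ df ∈ defsInner fresh C, df.1 = fresh df.2 ∧ ∀ b ∈ df.2, b ∈ C.cNames := by
  match C with
  | .atom a => simp [defsInner]
  | .bot => simp [defsInner]
  | .ival f l u => simp [defsInner]
  | .ex r c =>
      intro df hdf
      have e : defsInner fresh (SPL.ex r c) = defsOf fresh c := by simp [defsInner]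
      rw [e] at hdf
      obtain ⟨h1, h2⟩ := defsOf_spec fresh c df hdf
      exact ⟨h1, fun b hb => h2 b hb⟩
  | .inter c c' =>
      intro df hdf
      have e : defsInner fresh (SPL.inter c c') = defsInner fresh c ++ defsInner fresh c' := by
        simp [defsInner]
      rw [e] at hdf
      rcases List.mem_append.mp hdf with h | h
      · obtain ⟨h1, h2⟩ := defsInner_spec fresh c df h
        exact ⟨h1, fun b hb => Or.inl (h2 b hb)⟩
      · obtain ⟨h1, h2⟩ := defsInner_spec fresh c' df h
        exact ⟨h1, fun b hb => Or.inr (h2 b hb)⟩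
  termination_by 2 * C.size
  decreasing_by all_goals (simp [SPL.size]; try omega)
end

/-- Upper bound on concept names of a simple concept. -/
def cbound : SPL → ℕ
  | .atom a => a + 1
  | .bot => 0
  | .ival _ _ _ => 0
  | .ex _ c => cbound c
  | .inter c d => max (cbound c) (cbound d)

lemma lt_cbound : ∀ C : SPL, ∀ a ∈ C.cNames, a < cbound C := by
  intro C
  induction C with
  | atom a => intro b hb; simp [SPL.cNames] at hb; simp [cbound, hb]
  | bot => intro b hb; simp [SPL.cNames] at hb
  | ival f l u => intro b hb; simp [SPL.cNames] at hb
  | ex r c ih => intro b hb; exact ih b hb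
  | inter c c' ihc ihd =>
      intro b hb
      rcases hb with h | h
      · exact lt_of_lt_of_le (ihc b h) (le_max_left _ _)
      · exact lt_of_lt_of_le (ihd b h) (le_max_right _ _)


/-! ### Modifying the interpretation of concept names -/

/-- Replace the concept-name interpretation. -/
def withConc (I : Interp) (f : ℕ → Set I.Δ) : Interp :=
  ⟨I.Δ, I.nonempty, f, I.role, I.cprop⟩

lemma sem_withConc (I : Interp) (f : ℕ → Set I.Δ) :
    ∀ c : SPL, (∀ a ∈ c.cNames, f a = I.conc a) → SPL.sem (withConc I f) c = c.sem I := by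
  intro c
  induction c with
  | atom a => intro h; exact h a rfl
  | bot => intro _; rfl
  | ival g l u => intro _; rfl
  | ex r c ih =>
      intro h
      have := ih h
      show {d | ∃ e, (d, e) ∈ I.role r ∧ e ∈ SPL.sem (withConc I f) c} = _
      rw [this]
      rfl
  | inter c c' ihc ihd =>
      intro h
      show SPL.sem (withConc I f) c ∩ SPL.sem (withConc I f) c' = _
      rw [ihc fun a ha => h a (Or.inl ha), ihd fun a ha => h a (Or.inr ha)]
      rfl

lemma semL_withConc (I : Interp) (f : ℕ → Set I.Δ) (C : PLC)
    (h : ∀ a ∈ cNamesL C, f a = I.conc a) : semL (withConc I f) C = semL I C := by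
  ext d
  simp only [semL, Set.mem_setOf_eq]
  constructor
  · rintro ⟨c, hc, hd⟩
    refine ⟨c, hc, ?_⟩
    rwa [sem_withConc I f c fun a ha => h a ⟨c, hc, ha⟩] at hd
  · rintro ⟨c, hc, hd⟩
    refine ⟨c, hc, ?_⟩
    rwa [sem_withConc I f c fun a ha => h a ⟨c, hc, ha⟩]

lemma satAx_withConc (I : Interp) (f : ℕ → Set I.Δ) (ax : PLAx)
    (h : ∀ a ∈ PLAx.cNames ax, f a = I.conc a) :
    (withConc I f).satAx ax ↔ I.satAx ax := by
  cases ax with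
  | funcRole r => rfl
  | funcProp g => rfl
  | rangeAx r a =>
      have ha := h a (by simp [PLAx.cNames])
      simp only [Interp.satAx, withConc, ha]
      exact Iff.rfl
  | incl a b =>
      have ha := h a (by simp [PLAx.cNames])
      have hb := h b (by simp [PLAx.cNames])
      simp only [Interp.satAx, withConc, ha, hb]
      exact Iff.rfl
  | disj a b =>
      have ha := h a (by simp [PLAx.cNames])
      have hb := h b (by simp [PLAx.cNames])
      simp only [Interp.satAx, withConc, ha, hb]
      exact Iff.rfl

lemma hrole_sem_withConc (I : Interp) (f : ℕ → Set I.Δ) (R : HRole) :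
    HRole.sem (withConc I f) R = R.sem I := by
  cases R <;> rfl

lemma hatom_sem_withConc (I : Interp) (f : ℕ → Set I.Δ) (A : HAtom)
    (h : ∀ a ∈ HAtom.cNames A, f a = I.conc a) :
    HAtom.sem (withConc I f) A = A.sem I := by
  cases A with
  | name a => exact h a rfl
  | top => rfl
  | bot => rfl
  | self s =>
      simp only [HAtom.sem, hrole_sem_withConc]
      rfl

lemma semChain_withConc (I : Interp) (f : ℕ → Set I.Δ) (rs : List HRole) :
    HRole.semChain (withConc I f) rs = HRole.semChain I rs := by
  induction rs with
  | nil => rfl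
  | cons r rest ih =>
      simp only [HRole.semChain, hrole_sem_withConc, ih]
      rfl

lemma satHAx_withConc (I : Interp) (f : ℕ → Set I.Δ) (ax : HAx)
    (h : ∀ a ∈ HAx.cNames ax, f a = I.conc a) :
    (withConc I f).satHAx ax ↔ I.satHAx ax := by
  cases ax with
  | sub2 c1 c2 d =>
      have e1 := hatom_sem_withConc I f c1 fun a ha => h a (Or.inl (Or.inl ha))
      have e2 := hatom_sem_withConc I f c2 fun a ha => h a (Or.inl (Or.inr ha))
      have e3 := hatom_sem_withConc I f d fun a ha => h a (Or.inr ha)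
      simp only [Interp.satHAx, e1, e2, e3]
      try rfl
  | subEx r c d =>
      have e1 := hatom_sem_withConc I f c fun a ha => h a (Or.inl ha)
      have e2 := hatom_sem_withConc I f d fun a ha => h a (Or.inr ha)
      simp only [Interp.satHAx, e1, e2, hrole_sem_withConc]
      try rfl
  | subAll c r d =>
      have e1 := hatom_sem_withConc I f c fun a ha => h a (Or.inl ha)
      have e2 := hatom_sem_withConc I f d fun a ha => h a (Or.inr ha)
      simp only [Interp.satHAx, e1, e2, hrole_sem_withConc]
      try rfl
  | subToEx c r d =>
      have e1 := hatom_sem_withConc I f c fun a ha => h a (Or.inl ha)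
      have e2 := hatom_sem_withConc I f d fun a ha => h a (Or.inr ha)
      simp only [Interp.satHAx, e1, e2, hrole_sem_withConc]
      try rfl
  | atMost1 c s d =>
      have e1 := hatom_sem_withConc I f c fun a ha => h a (Or.inl ha)
      have e2 := hatom_sem_withConc I f d fun a ha => h a (Or.inr ha)
      simp only [Interp.satHAx, e1, e2, hrole_sem_withConc]
      try rfl
  | atLeast c n s d =>
      have e1 := hatom_sem_withConc I f c fun a ha => h a (Or.inl ha)
      have e2 := hatom_sem_withConc I f d fun a ha => h a (Or.inr ha)
      simp only [Interp.satHAx, e1, e2, hrole_sem_withConc]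
      try rfl
  | rIncl rs r =>
      simp only [Interp.satHAx, semChain_withConc, hrole_sem_withConc]
      try rfl
  | rDisj s1 s2 =>
      simp only [Interp.satHAx, hrole_sem_withConc]
      try rfl


/-! ### Full-concept translation -/

/-- Single-atom translation of a full concept. -/
def trL (fresh : List ℕ → ℕ) (C : PLC) : PLC :=
  (C.filter fun c => !hasBot c).map (trS fresh)

/-- All definitions generated for a full concept. -/
def defsL (fresh : List ℕ → ℕ) (C : PLC) : List CDef :=
  (C.filter fun c => !hasBot c).flatMap (defsOf fresh)

lemma hasBot_of_mem_filter {C : PLC} {c : SPL} (h : c ∈ C.filter fun c => !hasBot c) :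
    c ∈ C ∧ hasBot c = false := by
  have := List.mem_filter.mp h
  simpa using this

lemma semL_trL (fresh : List ℕ → ℕ) (I : Interp) (C : PLC)
    (hdef : ∀ df ∈ defsL fresh C, I.satDef df) :
    semL I (trL fresh C) = semL I C := by
  ext d
  simp only [semL, Set.mem_setOf_eq, trL, List.mem_map]
  constructor
  · rintro ⟨c', ⟨c, hc, rfl⟩, hd⟩
    obtain ⟨hcC, hcb⟩ := hasBot_of_mem_filter hc
    have hdc : ∀ df ∈ defsOf fresh c, I.satDef df := fun df h =>
      hdef df (List.mem_flatMap.mpr ⟨c, hc, h⟩)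
    exact ⟨c, hcC, (sem_trS fresh I c hcb hdc d).mp hd⟩
  · rintro ⟨c, hc, hd⟩
    by_cases hb : hasBot c
    · rw [sem_empty_of_hasBot I c hb] at hd
      exact absurd hd (Set.notMem_empty d)
    · have hb' : hasBot c = false := by simpa using hb
      have hcf : c ∈ C.filter fun c => !hasBot c := List.mem_filter.mpr (by simp [hc, hb'])
      have hdc : ∀ df ∈ defsOf fresh c, I.satDef df := fun df h =>
        hdef df (List.mem_flatMap.mpr ⟨c, hcf, h⟩)
      exact ⟨trS fresh c, ⟨c, hcf, rfl⟩, (sem_trS fresh I c hb' hdc d).mpr hd⟩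

lemma singleAtom_trL (fresh : List ℕ → ℕ) (C : PLC) : SingleAtomL (trL fresh C) := by
  intro c hc
  obtain ⟨c', hc', rfl⟩ := List.mem_map.mp hc
  exact singleAtom_trS fresh c' (hasBot_of_mem_filter hc').2

lemma defsL_spec (fresh : List ℕ → ℕ) (C : PLC) :
    ∀ df ∈ defsL fresh C, df.1 = fresh df.2 ∧ ∀ b ∈ df.2, b ∈ cNamesL C := by
  intro df hdf
  obtain ⟨c, hc, h⟩ := List.mem_flatMap.mp hdf
  obtain ⟨h1, h2⟩ := defsOf_spec fresh c df h
  exact ⟨h1, fun b hb => ⟨c, (hasBot_of_mem_filter hc).1, h2 b hb⟩⟩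

lemma sizeL_trL (fresh : List ℕ → ℕ) : ∀ C : PLC, sizeL (trL fresh C) ≤ sizeL C := by
  have key : ∀ C : PLC, ((trL fresh C).map SPL.size).sum ≤ (C.map SPL.size).sum := by
    intro C
    induction C with
    | nil => simp [trL]
    | cons c cs ih =>
        by_cases hb : hasBot c
        · have : trL fresh (c :: cs) = trL fresh cs := by simp [trL, hb]
          rw [this]
          simp only [List.map_cons, List.sum_cons]
          omega
        · have hb' : hasBot c = false := by simpa using hb
          have : trL fresh (c :: cs) = trS fresh c :: trL fresh cs := by
            simp [trL, hb']
          rw [this]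
          simp only [List.map_cons, List.sum_cons]
          have := size_trS fresh c hb'
          omega
  intro C
  have := key C
  simp only [sizeL]
  omega

lemma defsSize_defsL (fresh : List ℕ → ℕ) : ∀ C : PLC,
    defsSize (defsL fresh C) ≤ 2 * (C.map SPL.size).sum := by
  intro C
  induction C with
  | nil => simp [defsL, defsSize]
  | cons c cs ih =>
      by_cases hb : hasBot c
      · have : defsL fresh (c :: cs) = defsL fresh cs := by simp [defsL, hb]
        rw [this]
        simp only [List.map_cons, List.sum_cons]
        omega
      · have hb' : hasBot c = false := by simpa using hb
        have : defsL fresh (c :: cs) = defsOf fresh c ++ defsL fresh cs := by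
          simp [defsL, hb']
        rw [this, defsSize_append]
        simp only [List.map_cons, List.sum_cons]
        have := defsOf_size fresh c
        omega

lemma defsSize_flatMap (g : PLC → List CDef) : ∀ l : List PLC,
    defsSize (l.flatMap g) = (l.map fun x => defsSize (g x)).sum := by
  intro l
  induction l with
  | nil => simp [defsSize]
  | cons x xs ih => simp [List.flatMap_cons, defsSize_append, ih]



/-- for every finite set `BP` of PL concepts there are a set
    `BP* = tr '' BP` of PL concepts in single-atom form and a knowledge base `O*`
    consisting only of definitions `B ≡ A₁ ⊓ … ⊓ Aₙ` with fresh names `B`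
    (hence expressible in both EL and DL-lite_horn), such that for every PLSO
    instance `(K, O, C ⊑ D)` with `C ∈ BP`, `K ∪ O ⊨ C ⊑ D` iff
    `K ∪ O ∪ O* ⊨ C* ⊑ D` where `C* = tr C ∈ BP*`; moreover `BP*` and `O*`
    can be computed in linear time (rendered here as a linear size bound). -/
theorem statement_15 :
    ∃ k : ℕ, ∀ BP : Finset PLC,
      ∃ (tr : PLC → PLC) (Ostar : List CDef),
        (∀ C ∈ BP, SingleAtomL (tr C)) ∧
        (∀ df ∈ Ostar, ∀ C ∈ BP, df.1 ∉ cNamesL C) ∧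
        ((∑ C ∈ BP, sizeL (tr C)) + defsSize Ostar ≤ k * ((∑ C ∈ BP, sizeL C) + 1)) ∧
        (∀ (K : Set PLAx) (O : Set HAx) (C D : PLC),
          C ∈ BP → K.Finite → O.Finite → C ≠ [] → D ≠ [] →
          ((rNamesPL K ∪ rNamesL C ∪ rNamesL D) ∩ rNamesH O = ∅) →
          (∀ df ∈ Ostar, df.1 ∉ cNamesPL K ∧ df.1 ∉ cNamesH O ∧ df.1 ∉ cNamesL D) →
          (EntailsKO K O C D ↔ EntailsKODefs K O Ostar (tr C) D)) := by
  refine ⟨3, fun BP => ?_⟩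
  classical
  set N : ℕ := BP.sup (fun C : PLC => (C.map cbound).sum) with hN
  have hltN : ∀ C ∈ BP, ∀ a ∈ cNamesL C, a < N := by
    rintro C hC a ⟨c, hc, ha⟩
    have h1 : a < cbound c := lt_cbound c a ha
    have h2 : cbound c ≤ (C.map cbound).sum :=
      List.single_le_sum (fun x _ => Nat.zero_le x) _ (List.mem_map_of_mem (f := cbound) hc)
    have h3 : (C.map cbound).sum ≤ N := Finset.le_sup (f := fun C : PLC => (C.map cbound).sum) hC
    omega
  set fresh : List ℕ → ℕ := fun as => N + Encodable.encode as with hfresh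
  have hfresh_inj : ∀ as bs : List ℕ, fresh as = fresh bs → as = bs := by
    intro as bs h
    simp only [hfresh] at h
    exact Encodable.encode_injective (by omega)
  have hfresh_ge : ∀ as : List ℕ, N ≤ fresh as := fun as => Nat.le_add_right _ _
  refine ⟨trL fresh, BP.toList.flatMap (defsL fresh), ?_, ?_, ?_, ?_⟩
  -- single atom form
  · exact fun C _ => singleAtom_trL fresh C
  -- freshness w.r.t. BP
  · intro df hdf C hC ha
    obtain ⟨C0, hC0, hdf0⟩ := List.mem_flatMap.mp hdf
    have h1 := (defsL_spec fresh C0 df hdf0).1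
    have := hltN C hC df.1 ha
    have := hfresh_ge df.2
    omega
  -- size bound
  · have h1 : (∑ C ∈ BP, sizeL (trL fresh C)) ≤ ∑ C ∈ BP, sizeL C :=
      Finset.sum_le_sum fun C _ => sizeL_trL fresh C
    have h2 : defsSize (BP.toList.flatMap (defsL fresh)) ≤ 2 * ∑ C ∈ BP, sizeL C := by
      rw [defsSize_flatMap]
      have e : (BP.toList.map fun x => defsSize (defsL fresh x)).sum =
          ∑ C ∈ BP, defsSize (defsL fresh C) := Finset.sum_map_toList BP _
      rw [e, Finset.mul_sum]
      refine Finset.sum_le_sum fun C _ => ?_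
      have := defsSize_defsL fresh C
      simp only [sizeL]
      omega
    omega
  -- the equivalence
  · intro K O C D hC _ _ _ _ _ hfreshHyp
    have hOstar_spec : ∀ df ∈ BP.toList.flatMap (defsL fresh),
        df.1 = fresh df.2 ∧ ∀ b ∈ df.2, b < N := by
      intro df hdf
      obtain ⟨C0, hC0, hdf0⟩ := List.mem_flatMap.mp hdf
      obtain ⟨h1, h2⟩ := defsL_spec fresh C0 df hdf0
      exact ⟨h1, fun b hb => hltN C0 (Finset.mem_toList.mp hC0) b (h2 b hb)⟩
    have hOstar_ge : ∀ df ∈ BP.toList.flatMap (defsL fresh), N ≤ df.1 := by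
      intro df hdf
      rw [(hOstar_spec df hdf).1]
      exact hfresh_ge df.2
    have hdefsC : ∀ df ∈ defsL fresh C, df ∈ BP.toList.flatMap (defsL fresh) :=
      fun df h => List.mem_flatMap.mpr ⟨C, Finset.mem_toList.mpr hC, h⟩
    constructor
    · -- easy direction
      intro hEnt I hK hO hdefs
      have hd : ∀ df ∈ defsL fresh C, I.satDef df := fun df h => hdefs df (hdefsC df h)
      rw [semL_trL fresh I C hd]
      exact hEnt I hK hO
    · -- converse direction: extend the interpretation to the fresh names
      intro hEnt I hK hO
      set Ostar := BP.toList.flatMap (defsL fresh) with hOs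
      set f : ℕ → Set I.Δ := fun a =>
        match Ostar.find? (fun df => df.1 == a) with
        | some df => {d | ∀ b ∈ df.2, d ∈ I.conc b}
        | none => I.conc a with hf
      have hkey : ∀ a : ℕ, (∀ df ∈ Ostar, df.1 ≠ a) → f a = I.conc a := by
        intro a h
        have : Ostar.find? (fun df => df.1 == a) = none := by
          rw [List.find?_eq_none]
          intro df hdf
          simpa using h df hdf
        simp only [hf, this]
      have hlow : ∀ a : ℕ, a < N → f a = I.conc a := by
        intro a ha
        refine hkey a fun df hdf => ?_
        have := hOstar_ge df hdf
        omega
      -- the modified interpretation satisfies everything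
      have hK' : (withConc I f).satKB K := by
        intro ax hax
        rw [satAx_withConc I f ax fun a ha => hkey a fun df hdf h => ?_]
        · exact hK ax hax
        · exact (hfreshHyp df hdf).1 ⟨ax, hax, h ▸ ha⟩
      have hO' : (withConc I f).satHKB O := by
        intro ax hax
        rw [satHAx_withConc I f ax fun a ha => hkey a fun df hdf h => ?_]
        · exact hO ax hax
        · exact (hfreshHyp df hdf).2.1 ⟨ax, hax, h ▸ ha⟩
      have hdefs' : ∀ df ∈ Ostar, (withConc I f).satDef df := by
        intro df hdf
        show f df.1 = {d | ∀ b ∈ df.2, d ∈ f b}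
        have hfind : ∃ df', Ostar.find? (fun dg => dg.1 == df.1) = some df' := by
          cases h : Ostar.find? (fun dg => dg.1 == df.1) with
          | none =>
              exact absurd (by simp : (df.1 == df.1) = true)
                (by simpa using List.find?_eq_none.mp h df hdf)
          | some df' => exact ⟨df', rfl⟩
        obtain ⟨df', hdf'⟩ := hfind
        have hmem' : df' ∈ Ostar := List.mem_of_find?_eq_some hdf'
        have heq : df'.1 = df.1 := by simpa using List.find?_some hdf'
        have hbodies : df'.2 = df.2 := by
          have e1 := (hOstar_spec df hdf).1
          have e2 := (hOstar_spec df' hmem').1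
          exact hfresh_inj _ _ (by rw [← e2, ← e1, heq])
        have hfd : f df.1 = {d | ∀ b ∈ df.2, d ∈ I.conc b} := by
          simp only [hf, hdf', hbodies]
        rw [hfd]
        ext d
        simp only [Set.mem_setOf_eq]
        refine forall_congr' fun b => forall_congr' fun hb => ?_
        rw [hlow b ((hOstar_spec df hdf).2 b hb)]
      -- transfer
      have hCN : ∀ a ∈ cNamesL C, f a = I.conc a := fun a ha => hlow a (hltN C hC a ha)
      have hDN : ∀ a ∈ cNamesL D, f a = I.conc a := fun a ha =>
        hkey a fun df hdf h => (hfreshHyp df hdf).2.2 (h ▸ ha)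
      have e1 : semL (withConc I f) C = semL I C := semL_withConc I f C hCN
      have e2 : semL (withConc I f) D = semL I D := semL_withConc I f D hDN
      have e3 : semL (withConc I f) (trL fresh C) = semL (withConc I f) C :=
        semL_trL fresh (withConc I f) C fun df h => hdefs' df (hdefsC df h)
      have hsub := hEnt (withConc I f) hK' hO' hdefs'
      rw [e3, e1, e2] at hsub
      exact hsub

end PLPaper
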